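/- For n ≥ 1, the folded hypercube FQ_n is a bipartite graph if and only if n is odd. -/

import Mathlib

/-- Number of coordinates in which two vertices of the cube differ (Hamming distance). -/
def diffCount {n : ℕ} (x y : Fin n → Bool) : ℕ :=
  (Finset.univ.filter fun i => x i ≠ y i).card

lemma diffCount_comm {n : ℕ} (x y : Fin n → Bool) : diffCount x y = diffCount y x := by
  unfold diffCount
  congr 1
  apply Finset.filter_congr
  intro i _
  exact ne_comm

/-- The `n`-dimensional hypercube. -/
def Qn (n : ℕ) : SimpleGraph (Fin n → Bool) where
  Adj x y := diffCount x y = 1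
  symm := ⟨by intro x y h; show diffCount y x = 1; rw [diffCount_comm]; exact h⟩
  loopless := ⟨by intro x h; simp [diffCount] at h⟩

/-- The `n`-dimensional folded hypercube. -/
def FQn (n : ℕ) : SimpleGraph (Fin n → Bool) where
  Adj x y := x ≠ y ∧ (diffCount x y = 1 ∨ diffCount x y = n)
  symm := ⟨by
    rintro x y ⟨h1, h2⟩
    exact ⟨h1.symm, by rw [diffCount_comm]; exact h2⟩⟩
  loopless := ⟨fun x h => h.1 rfl⟩

/-- Flip bit `i` (hypercube neighbour `u^{i+1}` in 1-based notation). -/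
def hFlip {n : ℕ} (u : Fin n → Bool) (i : Fin n) : Fin n → Bool :=
  fun j => if j = i then !(u j) else u j

/-- Flip bits `0,…,i` (complement neighbour `ū^{i+1}` in 1-based notation). -/
def cFlip {n : ℕ} (u : Fin n → Bool) (i : Fin n) : Fin n → Bool :=
  fun j => if j ≤ i then !(u j) else u j

lemma hFlip_hFlip {n : ℕ} (u : Fin n → Bool) (i : Fin n) : hFlip (hFlip u i) i = u := by
  funext j; simp only [hFlip]; split <;> simp

lemma cFlip_cFlip {n : ℕ} (u : Fin n → Bool) (i : Fin n) : cFlip (cFlip u i) i = u := by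
  funext j; simp only [cFlip]; split <;> simp

/-- The `n`-dimensional augmented cube. -/
def AQn (n : ℕ) : SimpleGraph (Fin n → Bool) where
  Adj x y := x ≠ y ∧ ((∃ i, y = hFlip x i) ∨ (∃ i : Fin n, 1 ≤ i.val ∧ y = cFlip x i))
  symm := ⟨by
    rintro x y ⟨h1, h2⟩
    refine ⟨h1.symm, ?_⟩
    rcases h2 with ⟨i, rfl⟩ | ⟨i, hi, rfl⟩
    · exact Or.inl ⟨i, (hFlip_hFlip x i).symm⟩
    · exact Or.inr ⟨i, hi, (cFlip_cFlip x i).symm⟩⟩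
  loopless := ⟨fun x h => h.1 rfl⟩


/-- Weight parity of a vertex. -/
def pwt {n : ℕ} (x : Fin n → Bool) : ZMod 2 :=
  ∑ i, (if x i then 1 else 0)

lemma pwt_add {n : ℕ} (x y : Fin n → Bool) :
    pwt x + pwt y = (diffCount x y : ZMod 2) := by
  unfold pwt diffCount
  rw [← Finset.sum_add_distrib]
  rw [Finset.card_eq_sum_ones, Nat.cast_sum, Finset.sum_filter]
  apply Finset.sum_congr rfl
  intro i _
  rcases hx : x i <;> rcases hy : y i <;> simp <;> decide

def pvert (n k : ℕ) : Fin n → Bool := fun j => decide (j.val < k)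

lemma diff_pvert_succ {n k : ℕ} (hk : k < n) :
    diffCount (pvert n k) (pvert n (k+1)) = 1 := by
  unfold diffCount pvert
  have : (Finset.univ.filter fun i : Fin n => ¬(decide (i.val < k) = decide (i.val < k+1)))
      = {⟨k, hk⟩} := by
    ext i
    simp only [Finset.mem_filter, Finset.mem_univ, true_and, Finset.mem_singleton,
      decide_eq_decide, Fin.ext_iff]
    omega
  simp only [ne_eq, this, Finset.card_singleton]

lemma pvert_ne_succ {n k : ℕ} (hk : k < n) : pvert n k ≠ pvert n (k+1) := by
  intro h
  have := congrFun h ⟨k, hk⟩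
  simp [pvert] at this

lemma diff_pvert_n {n : ℕ} : diffCount (pvert n 0) (pvert n n) = n := by
  unfold diffCount pvert
  have : (Finset.univ.filter fun i : Fin n => ¬(decide (i.val < 0) = decide (i.val < n)))
      = Finset.univ := by
    ext i
    simp [i.isLt]
  rw [this]
  simp

lemma zmod2_ne {a b : ZMod 2} (h : a ≠ b) : b = a + 1 := by
  revert h; revert a b; decide

/-- for `n ≥ 1`, `FQ_n` is bipartite (2-colorable) iff `n` is odd. -/
theorem stmt3 (n : ℕ) (hn : 1 ≤ n) :
    (FQn n).Colorable 2 ↔ Odd n := by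
  constructor
  · -- Colorable → Odd
    intro hc
    by_contra hodd
    have heven : Even n := Nat.not_odd_iff_even.mp hodd
    obtain ⟨C⟩ := hc
    -- view colors in ZMod 2
    let f : (Fin n → Bool) → ZMod 2 := fun v => (C v : Fin 2)
    have hf : ∀ a b, (FQn n).Adj a b → f a ≠ f b := by
      intro a b hab h
      exact C.valid hab (by exact_mod_cast h)
    have key : ∀ k, k ≤ n → f (pvert n k) = f (pvert n 0) + (k : ZMod 2) := by
      intro k
      induction k with
      | zero => intro _; simp
      | succ k ih =>
        intro hk
        have hk' : k < n := by omega
        have hadj : (FQn n).Adj (pvert n k) (pvert n (k+1)) :=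
          ⟨pvert_ne_succ hk', Or.inl (diff_pvert_succ hk')⟩
        have := zmod2_ne (hf _ _ hadj)
        rw [this, ih (by omega)]
        push_cast
        ring
    have hne0 : pvert n 0 ≠ pvert n n := by
      intro h
      have := congrFun h ⟨0, by omega⟩
      simp [pvert, hn] at this
      omega
    have hadj : (FQn n).Adj (pvert n 0) (pvert n n) :=
      ⟨hne0, Or.inr diff_pvert_n⟩
    have hcast : (n : ZMod 2) = 0 := by
      have : (2 : ℕ) ∣ n := even_iff_two_dvd.mp heven
      exact (ZMod.natCast_eq_zero_iff n 2).mpr this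
    have := hf _ _ hadj
    rw [key n le_rfl, hcast, add_zero] at this
    exact this rfl
  · -- Odd → Colorable
    intro hodd
    have C : (FQn n).Coloring (ZMod 2) := by
      refine SimpleGraph.Coloring.mk pwt ?_
      rintro x y ⟨hne, hd⟩ h
      have h1 : pwt x + pwt y = (diffCount x y : ZMod 2) := pwt_add x y
      have hdodd : Odd (diffCount x y) := by
        rcases hd with h | h
        · rw [h]; exact odd_one
        · rw [h]; exact hodd
      have : (diffCount x y : ZMod 2) = 1 := by
        obtain ⟨m, hm⟩ := hdodd
        rw [hm]; push_cast; ring_nf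
        simp [show ((2:ZMod 2)) = 0 from rfl]
      rw [h, this, CharTwo.add_self_eq_zero] at h1
      exact zero_ne_one h1
    simpa [ZMod.card] using C.colorable
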